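/- Lower bound on θ at interior critical points (equations (fpu18:11)–(fpu18:12)). Fix s < t, 0 < δ₁ < δ₂ < 1, c* ≥ 1 and Δ ∈ (0,1), and assume v̂per₊(w) ≤ 2 v*(w) (1−Δ) for all w. For u ∈ (s,t), define κ(u) = (δ₂/δ₁) e^{−α(u,s)}, r(u) = v̂₊(u,s)/v̂₊(t,s), and θ(u) = κ(u) + r(u) − 1. If θ′(u) = 0, which is equivalent to κ(u) = 2 v*(u) e^{−2α(u,s)} / v̂₊(t,s), and if 1 − r(u) ≥ 1/c*, then θ(u) = (e^{−2α(u,s)}/v̂₊(t,s)) (2 v*(u) − v̂₊(t,u)) ≥ Δ/(c*(1−Δ)). -/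

import Mathlib

set_option maxHeartbeats 1000000


open MeasureTheory intervalIntegral

/-- Lower bound on θ at interior critical points
(equations (fpu18:11)–(fpu18:12)). -/
theorem theta_lower_bound_critical
    (T : ℝ) (hT : 0 < T) (a g : ℝ → ℝ)
    (ha : ContDiff ℝ 1 a) (hg : ContDiff ℝ 1 g)
    (haper : ∀ t, a (t + T) = a t) (hgper : ∀ t, g (t + T) = g t)
    (a0 g0 : ℝ) (ha0 : 0 < a0) (hg0 : 0 < g0)
    (halb : ∀ t, a0 ≤ a t) (hglb : ∀ t, g0 ≤ g t)
    (α : ℝ → ℝ) (hα : ∀ t, α t = ∫ u in (0:ℝ)..t, a u)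
    (lam : ℝ) (hlam : lam = α T / T)
    (vstar : ℝ → ℝ) (hvstar : ∀ t, vstar t = g t ^ 2 / (2 * a t))
    (vhat : ℝ → ℝ → ℝ)
    (hvhat : ∀ t s, vhat t s = ∫ u in s..t, Real.exp (-2 * (α u - α s)) * g u ^ 2)
    (vhatper : ℝ → ℝ)
    (hvhatper : ∀ t, vhatper t = (Real.exp (2 * lam * T) - 1)⁻¹ *
      ∫ s in t..t + T, Real.exp (2 * (α (t + T) - α s)) * g s ^ 2)
    (δ₁ δ₂ : ℝ) (hδ₁ : 0 < δ₁) (hδ₁₂ : δ₁ < δ₂) (hδ₂ : δ₂ < 1)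
    (cstar : ℝ) (hcstar : 1 ≤ cstar)
    (Δ : ℝ) (hΔ : 0 < Δ) (hΔ1 : Δ < 1)
    (hH3 : ∀ w, vhatper w ≤ 2 * vstar w * (1 - Δ))
    (s t u : ℝ) (hst : s < t) (hsu : s < u) (hut : u < t)
    (κ r θ : ℝ)
    (hκ : κ = δ₂ / δ₁ * Real.exp (-(α u - α s)))
    (hr : r = vhat u s / vhat t s)
    (hθ : θ = κ + r - 1)
    (hcrit : κ = 2 * vstar u * Real.exp (-2 * (α u - α s)) / vhat t s)
    (hru : 1 / cstar ≤ 1 - r) :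
    θ = Real.exp (-2 * (α u - α s)) / vhat t s * (2 * vstar u - vhat t u)
    ∧ Δ / (cstar * (1 - Δ)) ≤ θ := by
  have hac : Continuous a := ha.continuous
  have hgc : Continuous g := hg.continuous
  have hαc : Continuous α := by
    have h : α = fun t => ∫ u in (0:ℝ)..t, a u := funext hα
    rw [h]
    exact intervalIntegral.continuous_primitive (fun x y => hac.intervalIntegrable x y) 0
  have hFc : ∀ w : ℝ, Continuous fun p => Real.exp (-2 * (α p - α w)) * g p ^ 2 := by
    intro w
    exact (Real.continuous_exp.comp (by fun_prop)).mul (hgc.pow 2)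
  have hFi : ∀ w x y : ℝ,
      IntervalIntegrable (fun p => Real.exp (-2 * (α p - α w)) * g p ^ 2) volume x y :=
    fun w x y => (hFc w).intervalIntegrable x y
  -- α(x+T) = α x + α T
  have hαT : ∀ x, α (x + T) = α x + α T := by
    intro x
    have h1 : (∫ p in T..(x+T), a p) = ∫ p in (0:ℝ)..x, a p := by
      have h := intervalIntegral.integral_comp_add_right (a := (0:ℝ)) (b := x) (f := a) T
      simp only [haper, zero_add] at h
      exact h.symm
    have h2 : (∫ p in (0:ℝ)..T, a p) + ∫ p in T..(x+T), a p = ∫ p in (0:ℝ)..(x+T), a p :=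
      intervalIntegral.integral_add_adjacent_intervals (hac.intervalIntegrable _ _)
        (hac.intervalIntegrable _ _)
    rw [hα (x+T), hα x, hα T, ← h2, h1]; ring
  -- αT = lam * T, positive
  have hαTpos : 0 < α T := by
    rw [hα]
    exact intervalIntegral.intervalIntegral_pos_of_pos_on (hac.intervalIntegrable _ _)
      (fun p _ => lt_of_lt_of_le ha0 (halb p)) hT
  have hlamT : lam * T = α T := by rw [hlam]; field_simp
  have hE1 : 1 < Real.exp (2 * lam * T) := by
    rw [Real.one_lt_exp_iff]; nlinarith
  set E := Real.exp (2 * lam * T) with hEdef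
  have hEpos : 0 < E := Real.exp_pos _
  -- splitting lemma
  have hsplit : ∀ w x y : ℝ,
      vhat y w = vhat x w + Real.exp (-2 * (α x - α w)) * vhat y x := by
    intro w x y
    rw [hvhat y w, hvhat x w, hvhat y x]
    have hadj := intervalIntegral.integral_add_adjacent_intervals (hFi w w x) (hFi w x y)
    rw [← hadj]
    congr 1
    rw [← intervalIntegral.integral_const_mul]
    apply intervalIntegral.integral_congr
    intro p hp
    simp only
    rw [← mul_assoc, ← Real.exp_add]
    congr 2
    ring
  -- shift lemma
  have hshift : ∀ w x : ℝ, vhat (x + T) (w + T) = vhat x w := by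
    intro w x
    rw [hvhat (x+T) (w+T), hvhat x w]
    have h := intervalIntegral.integral_comp_add_right (a := w) (b := x)
      (f := fun p => Real.exp (-2 * (α p - α (w + T))) * g p ^ 2) T
    rw [← h]
    apply intervalIntegral.integral_congr
    intro p hp
    simp only
    rw [hαT p, hgper p, hαT w]
    congr 2
    ring
  -- positivity
  have hvpos : ∀ w x : ℝ, w < x → 0 < vhat x w := by
    intro w x hwx
    rw [hvhat]
    exact intervalIntegral.intervalIntegral_pos_of_pos_on (hFi w w x)
      (fun p _ => mul_pos (Real.exp_pos _) (pow_pos (lt_of_lt_of_le hg0 (hglb p)) 2)) hwx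
  have hvnonneg : ∀ w x : ℝ, w ≤ x → 0 ≤ vhat x w := by
    intro w x hwx
    rw [hvhat]
    apply intervalIntegral.integral_nonneg hwx
    intro p _
    positivity
  -- vhat (w+T) w = (1 - E⁻¹) * vhatper w
  have hper_eq : ∀ w, vhat (w + T) w = (1 - E⁻¹) * vhatper w := by
    intro w
    have key : (∫ p in w..w + T, Real.exp (2 * (α (w + T) - α p)) * g p ^ 2)
        = E * vhat (w + T) w := by
      rw [hvhat, ← intervalIntegral.integral_const_mul]
      apply intervalIntegral.integral_congr
      intro p hp
      simp only [hEdef]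
      rw [← mul_assoc, ← Real.exp_add]
      congr 2
      rw [hαT w]
      nlinarith [hlamT]
    rw [hvhatper, key]
    have hEne : E ≠ 0 := ne_of_gt hEpos
    have hE1ne : E - 1 ≠ 0 := by nlinarith
    field_simp
  -- α at shifted points
  have hαn : ∀ n : ℕ, α (u + n * T) = α u + n * α T := by
    intro n
    induction n with
    | zero => simp
    | succ n ih =>
      have harg : u + ((n : ℝ) + 1) * T = (u + n * T) + T := by ring
      push_cast
      rw [harg, hαT, ih]
      push_cast
      ring
  -- iterated shift
  have hshiftn : ∀ n : ℕ, vhat (u + n * T + T) (u + n * T) = vhat (u + T) u := by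
    intro n
    induction n with
    | zero => norm_num
    | succ n ih =>
      have h2 : u + ((n + 1 : ℕ) : ℝ) * T = (u + (n : ℕ) * T) + T := by push_cast; ring
      rw [h2, hshift (u + (n : ℕ) * T) (u + (n : ℕ) * T + T), ih]
  -- geometric formula
  have hformula : ∀ n : ℕ, vhat (u + n * T) u = (1 - E⁻¹ ^ n) * vhatper u := by
    intro n
    induction n with
    | zero =>
      simp only [Nat.cast_zero, zero_mul, add_zero, pow_zero, sub_self, zero_mul]
      rw [hvhat, intervalIntegral.integral_same]
    | succ n ih =>
      have h2 : u + ((n + 1 : ℕ) : ℝ) * T = (u + (n : ℕ) * T) + T := by push_cast; ring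
      have hs := hsplit u (u + n * T) (u + (n : ℕ) * T + T)
      have hexp : Real.exp (-2 * (α (u + n * T) - α u)) = E⁻¹ ^ n := by
        rw [hαn n, ← Real.exp_neg, ← Real.exp_nat_mul]
        congr 1
        nlinarith [hlamT]
      rw [h2, hs, hexp, hshiftn n, ih, hper_eq u]
      push_cast
      ring
  -- main bound : vhat t u ≤ vhatper u
  have hMpos : 0 < vhatper u := by
    have h := hper_eq u
    have h1 : 0 < vhat (u + T) u := hvpos _ _ (by linarith)
    have hinv : E⁻¹ < 1 := inv_lt_one_of_one_lt₀ hE1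
    rw [h] at h1
    rcases mul_pos_iff.mp h1 with ⟨_, hM⟩ | ⟨hneg, _⟩
    · exact hM
    · linarith
  have hbound : vhat t u ≤ vhatper u := by
    obtain ⟨n, hn⟩ := exists_nat_ge ((t - u) / T)
    have htn : t ≤ u + n * T := by
      rw [div_le_iff₀ hT] at hn
      linarith
    have h1 : vhat t u ≤ vhat (u + n * T) u := by
      have hs := hsplit u t (u + n * T)
      have hnn := mul_nonneg (Real.exp_pos (-2 * (α t - α u))).le
        (hvnonneg t (u + n * T) htn)
      linarith
    have h2 : vhat (u + n * T) u ≤ vhatper u := by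
      rw [hformula n]
      have hx : 0 ≤ E⁻¹ ^ n := by positivity
      nlinarith [mul_nonneg hx hMpos.le]
    linarith
  -- final algebra
  set A := Real.exp (-2 * (α u - α s)) with hA
  have hApos : 0 < A := Real.exp_pos _
  have hVpos : 0 < vhat t s := hvpos _ _ hst
  have hvtpos : 0 < vhat t u := hvpos _ _ hut
  have hVne : vhat t s ≠ 0 := ne_of_gt hVpos
  have hvtne : vhat t u ≠ 0 := ne_of_gt hvtpos
  have hsp := hsplit s u t
  rw [← hA] at hsp
  have part1 : θ = A / vhat t s * (2 * vstar u - vhat t u) := by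
    rw [hθ, hcrit, hr]
    field_simp
    linear_combination -hsp
  refine ⟨part1, ?_⟩
  have h1r : 1 - r = A * vhat t u / vhat t s := by
    rw [hr]
    field_simp
    linarith [hsp]
  have hvt_le : vhat t u ≤ 2 * vstar u * (1 - Δ) := le_trans hbound (hH3 u)
  have hθeq : θ = (1 - r) * ((2 * vstar u - vhat t u) / vhat t u) := by
    rw [part1, h1r]
    field_simp
  have hX : Δ / (1 - Δ) ≤ (2 * vstar u - vhat t u) / vhat t u := by
    rw [div_le_div_iff₀ (by linarith) hvtpos]
    nlinarith
  have hcpos : 0 < cstar := lt_of_lt_of_le one_pos hcstar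
  have hfin : (1 / cstar) * (Δ / (1 - Δ)) ≤ (1 - r) * ((2 * vstar u - vhat t u) / vhat t u) := by
    apply mul_le_mul hru hX (div_nonneg hΔ.le (by linarith)) (by linarith [hru, one_div_pos.mpr hcpos])
  rw [hθeq]
  calc Δ / (cstar * (1 - Δ)) = (1 / cstar) * (Δ / (1 - Δ)) := by
        field_simp
    _ ≤ _ := hfin
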